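/- Let G be an abelian group with maximal torsion subgroup T (the subgroup of all elements of finite order), and suppose G splits, i.e., G ≅ T ⊕ (G/T). Then G is Bassian-finite if and only if both T and G/T are Bassian-finite. -/

import Mathlib

/-- An abelian group `G` is *Bassian-finite* if there is no injective homomorphism
from `G` into a proper direct summand of `G`. -/
def BassianFinite (G : Type*) [AddCommGroup G] : Prop :=
  ∀ A B : AddSubgroup G, IsCompl A B → B ≠ ⊥ → ∀ φ : G →+ A, ¬ Function.Injective φ

section Aux

variable {G H : Type*} [AddCommGroup G] [AddCommGroup H]

lemma addSubgroup_ne_bot_exists {A : AddSubgroup G} (h : A ≠ ⊥) :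
    ∃ x ∈ A, x ≠ (0 : G) := by
  by_contra hc
  push_neg at hc
  exact h (AddSubgroup.eq_bot_iff_forall A |>.2 hc)

/-- Bassian-finiteness transfers along additive isomorphisms. -/
lemma bassianFinite_of_addEquiv (e : G ≃+ H) (h : BassianFinite H) : BassianFinite G := by
  intro A B hAB hB φ hφ
  refine h (A.map (e : G →+ H)) (B.map (e : G →+ H)) ⟨?_, ?_⟩ ?_
    ((e.addSubgroupMap A).toAddMonoidHom.comp (φ.comp (e.symm : H →+ G))) ?_
  · rw [AddSubgroup.disjoint_def]
    rintro x ⟨a, ha, rfl⟩ ⟨b, hb, hba⟩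
    have hab : b = a := e.injective hba
    subst hab
    have : b = 0 := AddSubgroup.disjoint_def.mp hAB.disjoint ha hb
    simp [this]
  · rw [codisjoint_iff, eq_top_iff]
    intro x _
    have hx : e.symm x ∈ A ⊔ B := by rw [hAB.sup_eq_top]; trivial
    rcases AddSubgroup.mem_sup.mp hx with ⟨a, ha, b, hb, hab⟩
    refine AddSubgroup.mem_sup.mpr ⟨e a, ⟨a, ha, rfl⟩, e b, ⟨b, hb, rfl⟩, ?_⟩
    rw [← map_add, hab]
    simp
  · intro hbot
    obtain ⟨b, hb, hb0⟩ := addSubgroup_ne_bot_exists hB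
    have : e b ∈ B.map (e : G →+ H) := ⟨b, hb, rfl⟩
    rw [hbot, AddSubgroup.mem_bot] at this
    exact hb0 (e.injective (by simpa using this))
  · exact (e.addSubgroupMap A).injective.comp (hφ.comp e.symm.injective)

/-- If `G × H` is Bassian-finite then so is `G`. -/
lemma bassianFinite_prod_left (h : BassianFinite (G × H)) : BassianFinite G := by
  intro A B hAB hB φ hφ
  have hmem : ∀ p : G × H, ((φ p.1 : G), p.2) ∈ A.prod (⊤ : AddSubgroup H) :=
    fun p => AddSubgroup.mem_prod.2 ⟨(φ p.1).2, trivial⟩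
  refine h (A.prod ⊤) (B.prod ⊥) ⟨?_, ?_⟩ ?_
    (AddMonoidHom.mk' (fun p => ⟨((φ p.1 : G), p.2), hmem p⟩) ?_) ?_
  · rw [AddSubgroup.disjoint_def]
    intro x hx1 hx2
    rcases AddSubgroup.mem_prod.1 hx1 with ⟨hA1, -⟩
    rcases AddSubgroup.mem_prod.1 hx2 with ⟨hB1, hbot⟩
    have h1 : x.1 = 0 := AddSubgroup.disjoint_def.mp hAB.disjoint hA1 hB1
    have h2 : x.2 = 0 := AddSubgroup.mem_bot.1 hbot
    exact Prod.ext h1 h2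
  · rw [codisjoint_iff, eq_top_iff]
    intro x _
    have hx : x.1 ∈ A ⊔ B := by rw [hAB.sup_eq_top]; trivial
    rcases AddSubgroup.mem_sup.mp hx with ⟨a, ha, b, hb, hab⟩
    refine AddSubgroup.mem_sup.mpr ⟨(a, x.2), AddSubgroup.mem_prod.2 ⟨ha, trivial⟩,
      (b, 0), AddSubgroup.mem_prod.2 ⟨hb, AddSubgroup.mem_bot.2 rfl⟩, ?_⟩
    simp [Prod.ext_iff, hab]
  · intro hbot
    obtain ⟨b, hb, hb0⟩ := addSubgroup_ne_bot_exists hB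
    have : (b, (0 : H)) ∈ B.prod (⊥ : AddSubgroup H) :=
      AddSubgroup.mem_prod.2 ⟨hb, AddSubgroup.mem_bot.2 rfl⟩
    rw [hbot, AddSubgroup.mem_bot] at this
    exact hb0 (congrArg Prod.fst this)
  · intro p q
    apply Subtype.ext
    simp [Prod.ext_iff]
  · intro p q hpq
    have h' : (((φ p.1 : G), p.2) : G × H) = (((φ q.1 : G), q.2) : G × H) :=
      Subtype.ext_iff.1 hpq
    rw [Prod.mk.injEq] at h'
    exact Prod.ext (hφ (Subtype.ext h'.1)) h'.2

/-- If `G × H` is Bassian-finite then so is `H`. -/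
lemma bassianFinite_prod_right (h : BassianFinite (G × H)) : BassianFinite H :=
  bassianFinite_prod_left (bassianFinite_of_addEquiv (AddEquiv.prodComm) h)

/-- If `T` is torsion and `Q` is torsion-free and both are Bassian-finite,
then `T × Q` is Bassian-finite. -/
lemma bassianFinite_prod_of_torsion_torsionFree {T Q : Type*} [AddCommGroup T] [AddCommGroup Q]
    (hT : ∀ t : T, IsOfFinAddOrder t) (hQ : ∀ q : Q, q ≠ 0 → ¬ IsOfFinAddOrder q)
    (h1 : BassianFinite T) (h2 : BassianFinite Q) : BassianFinite (T × Q) := by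
  intro A B hAB hBne φ hφ
  -- finite order in the product is detected by the second coordinate
  have hfin_iff : ∀ x : T × Q, IsOfFinAddOrder x ↔ x.2 = 0 := by
    intro x
    constructor
    · intro hx
      by_contra h2x
      obtain ⟨n, hn, hnx⟩ := isOfFinAddOrder_iff_nsmul_eq_zero.1 hx
      refine hQ x.2 h2x (isOfFinAddOrder_iff_nsmul_eq_zero.2 ⟨n, hn, ?_⟩)
      have := congrArg Prod.snd hnx
      simpa using this
    · intro hx
      obtain ⟨n, hn, hnt⟩ := isOfFinAddOrder_iff_nsmul_eq_zero.1 (hT x.1)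
      refine isOfFinAddOrder_iff_nsmul_eq_zero.2 ⟨n, hn, ?_⟩
      have : n • x = (n • x.1, n • x.2) := rfl
      rw [this, hnt, hx]
      simp
  -- if a + b has finite order with a ∈ A, b ∈ B, then both do
  have split_fin : ∀ a ∈ A, ∀ b ∈ B, IsOfFinAddOrder (a + b) → a.2 = 0 ∧ b.2 = 0 := by
    intro a ha b hb hfin
    obtain ⟨n, hn, hnab⟩ := isOfFinAddOrder_iff_nsmul_eq_zero.1 hfin
    rw [smul_add] at hnab
    have hna : n • a = -(n • b) := eq_neg_of_add_eq_zero_left hnab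
    have hmemA : n • a ∈ A := AddSubgroup.nsmul_mem A ha n
    have hmemB : n • a ∈ B := by rw [hna]; exact AddSubgroup.neg_mem B (AddSubgroup.nsmul_mem B hb n)
    have hza : n • a = 0 := AddSubgroup.disjoint_def.mp hAB.disjoint hmemA hmemB
    have hzb : n • b = 0 := by
      have := hnab
      rw [hza, zero_add] at this
      exact this
    constructor
    · exact (hfin_iff a).1 (isOfFinAddOrder_iff_nsmul_eq_zero.2 ⟨n, hn, hza⟩)
    · exact (hfin_iff b).1 (isOfFinAddOrder_iff_nsmul_eq_zero.2 ⟨n, hn, hzb⟩)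
  set ιT : T →+ T × Q := AddMonoidHom.inl T Q with hιT
  have hι : ∀ t : T, ιT t = (t, (0 : Q)) := fun t => rfl
  set At := A.comap ιT with hAt
  set Bt := B.comap ιT with hBt
  -- torsion parts form a complement pair
  have hAtBt : IsCompl At Bt := by
    constructor
    · rw [AddSubgroup.disjoint_def]
      intro x hx1 hx2
      have : ιT x = 0 := AddSubgroup.disjoint_def.mp hAB.disjoint hx1 hx2
      exact congrArg Prod.fst this
    · rw [codisjoint_iff, eq_top_iff]
      intro t _
      have hx : ιT t ∈ A ⊔ B := by rw [hAB.sup_eq_top]; trivial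
      rcases AddSubgroup.mem_sup.mp hx with ⟨a, ha, b, hb, hab⟩
      have hfin : IsOfFinAddOrder (a + b) := by
        rw [hab]
        exact (hfin_iff _).2 rfl
      obtain ⟨ha2, hb2⟩ := split_fin a ha b hb hfin
      have haA : a.1 ∈ At := by
        show ιT a.1 ∈ A
        have : ιT a.1 = a := Prod.ext rfl ha2.symm
        rwa [this]
      have hbB : b.1 ∈ Bt := by
        show ιT b.1 ∈ B
        have : ιT b.1 = b := Prod.ext rfl hb2.symm
        rwa [this]
      refine AddSubgroup.mem_sup.mpr ⟨a.1, haA, b.1, hbB, ?_⟩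
      have := congrArg Prod.fst hab
      simpa [hι] using this
  -- the map φ restricted to torsion
  have hφfin : ∀ t : T, ((φ (ιT t) : T × Q)).2 = 0 := by
    intro t
    have hord : IsOfFinAddOrder (ιT t) := (hfin_iff _).2 rfl
    obtain ⟨n, hn, hnt⟩ := isOfFinAddOrder_iff_nsmul_eq_zero.1 hord
    have : n • (φ (ιT t) : T × Q) = 0 := by
      have h0 : n • φ (ιT t) = 0 := by rw [← map_nsmul φ, hnt, map_zero]
      calc n • (φ (ιT t) : T × Q) = ((n • φ (ιT t) : A) : T × Q) := rfl
        _ = ((0 : A) : T × Q) := by rw [h0]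
        _ = 0 := rfl
    exact (hfin_iff _).1 (isOfFinAddOrder_iff_nsmul_eq_zero.2 ⟨n, hn, this⟩)
  have hψmem : ∀ t : T, (φ (ιT t) : T × Q).1 ∈ At := by
    intro t
    show ιT (φ (ιT t) : T × Q).1 ∈ A
    have : ιT (φ (ιT t) : T × Q).1 = ((φ (ιT t) : T × Q)) := Prod.ext rfl (hφfin t).symm
    rw [this]
    exact (φ (ιT t)).2
  set ψ : T →+ At := AddMonoidHom.mk' (fun t => ⟨(φ (ιT t) : T × Q).1, hψmem t⟩)
    (by intro s t; apply Subtype.ext; simp [map_add]) with hψ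
  have hψinj : Function.Injective ψ := by
    rw [injective_iff_map_eq_zero]
    intro t ht
    have h1' : (φ (ιT t) : T × Q).1 = 0 := Subtype.ext_iff.1 ht
    have hcoe : (φ (ιT t) : T × Q) = 0 := Prod.ext h1' (hφfin t)
    have hz : φ (ιT t) = 0 := Subtype.ext hcoe
    have := (injective_iff_map_eq_zero φ).1 hφ _ hz
    exact congrArg Prod.fst this
  by_cases hBtbot : Bt = ⊥
  · -- use the torsion-free quotient part
    set π : T × Q →+ Q := AddMonoidHom.snd T Q with hπ
    set Aq := A.map π with hAq
    set Bq := B.map π with hBq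
    have hdisj : Disjoint Aq Bq := by
      rw [AddSubgroup.disjoint_def]
      rintro q ⟨a, ha, rfl⟩ ⟨b, hb, hba⟩
      have hsnd : (a + -b).2 = 0 := by
        have : a.2 = π a := rfl
        simp [Prod.snd_add]
        show a.2 + -b.2 = 0
        change π b = π a at hba
        simp only [hπ, AddMonoidHom.coe_snd] at hba
        rw [hba]
        simp
      have hfin : IsOfFinAddOrder (a + -b) := (hfin_iff _).2 hsnd
      obtain ⟨ha2, -⟩ := split_fin a ha (-b) (AddSubgroup.neg_mem B hb) hfin
      exact ha2
    have hcodisj : Codisjoint Aq Bq := by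
      rw [codisjoint_iff, eq_top_iff]
      intro q _
      have hx : ((0 : T), q) ∈ A ⊔ B := by rw [hAB.sup_eq_top]; trivial
      rcases AddSubgroup.mem_sup.mp hx with ⟨a, ha, b, hb, hab⟩
      refine AddSubgroup.mem_sup.mpr ⟨a.2, ⟨a, ha, rfl⟩, b.2, ⟨b, hb, rfl⟩, ?_⟩
      have := congrArg Prod.snd hab
      simpa using this
    have hBqne : Bq ≠ ⊥ := by
      obtain ⟨b, hb, hb0⟩ := addSubgroup_ne_bot_exists hBne
      intro hbot
      have hb2 : b.2 = 0 := by
        have : π b ∈ Bq := ⟨b, hb, rfl⟩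
        rw [hbot, AddSubgroup.mem_bot] at this
        exact this
      have hb1 : b.1 ∈ Bt := by
        show ιT b.1 ∈ B
        have : ιT b.1 = b := Prod.ext rfl hb2.symm
        rwa [this]
      rw [hBtbot, AddSubgroup.mem_bot] at hb1
      exact hb0 (Prod.ext hb1 hb2)
    have hχmem : ∀ q : Q, (φ ((0 : T), q) : T × Q).2 ∈ Aq :=
      fun q => ⟨(φ ((0 : T), q) : T × Q), (φ ((0 : T), q)).2, rfl⟩
    set χ : Q →+ Aq := AddMonoidHom.mk' (fun q => ⟨(φ ((0 : T), q) : T × Q).2, hχmem q⟩)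
      (by
        intro s t
        apply Subtype.ext
        show (φ ((0 : T), s + t) : T × Q).2 = (φ ((0:T), s) : T × Q).2 + (φ ((0:T), t) : T × Q).2
        have : ((0 : T), s + t) = ((0 : T), s) + ((0 : T), t) := by simp
        rw [this, map_add]
        rfl) with hχ
    have hχinj : Function.Injective χ := by
      rw [injective_iff_map_eq_zero]
      intro q hq
      have h2' : (φ ((0 : T), q) : T × Q).2 = 0 := Subtype.ext_iff.1 hq
      have hvfin : IsOfFinAddOrder (φ ((0 : T), q) : T × Q) := (hfin_iff _).2 h2'
      obtain ⟨n, hn, hnv⟩ := isOfFinAddOrder_iff_nsmul_eq_zero.1 hvfin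
      have hz : φ (n • ((0 : T), q)) = 0 := by
        rw [map_nsmul]
        apply Subtype.ext
        exact hnv
      have h0 : n • ((0 : T), q) = 0 := (injective_iff_map_eq_zero φ).1 hφ _ hz
      have hnq : n • q = 0 := congrArg Prod.snd h0
      by_contra hq0
      exact hQ q hq0 (isOfFinAddOrder_iff_nsmul_eq_zero.2 ⟨n, hn, hnq⟩)
    exact h2 Aq Bq ⟨hdisj, hcodisj⟩ hBqne χ hχinj
  · exact h1 At Bt hAtBt hBtbot ψ hψinj

end Aux

/-- If `G` splits over its maximal torsion subgroup `T`, i.e. `G ≅ T ⊕ (G/T)`, then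
`G` is Bassian-finite if and only if both `T` and `G/T` are Bassian-finite. -/
theorem bassianFinite_iff_of_splits (G : Type*) [AddCommGroup G]
    (hsplit : Nonempty
      (G ≃+ (AddCommGroup.torsion G × (G ⧸ AddCommGroup.torsion G)))) :
    BassianFinite G ↔
      BassianFinite (AddCommGroup.torsion G) ∧
        BassianFinite (G ⧸ AddCommGroup.torsion G) := by
  obtain ⟨e⟩ := hsplit
  constructor
  · intro hG
    have hP : BassianFinite ((AddCommGroup.torsion G) × (G ⧸ AddCommGroup.torsion G)) :=
      bassianFinite_of_addEquiv e.symm hG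
    exact ⟨bassianFinite_prod_left hP, bassianFinite_prod_right hP⟩
  · rintro ⟨h1, h2⟩
    refine bassianFinite_of_addEquiv e
      (bassianFinite_prod_of_torsion_torsionFree ?_ ?_ h1 h2)
    · intro t
      have ht : IsOfFinAddOrder (t : G) := (AddCommGroup.mem_torsion (G := G) _).1 t.2
      obtain ⟨n, hn, h⟩ := isOfFinAddOrder_iff_nsmul_eq_zero.1 ht
      refine isOfFinAddOrder_iff_nsmul_eq_zero.2 ⟨n, hn, Subtype.ext ?_⟩
      push_cast
      exact h
    · intro q hq
      exact isAddTorsionFree_iff_not_isOfFinAddOrder.1 inferInstance hq
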